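/- Let Γ ⊆ ℕ² be a finite set that contains a point of the form (a,0) and a point of the form (0,b) (for some a,b ∈ ℕ), and let I ⊆ ℂ[z₁,z₂] be the ideal generated by the monomials z₁^{γ₁}z₂^{γ₂} with (γ₁,γ₂) ∈ Γ. Then there exists a constant C > 0 such that for every integer k ≥ 1, | dim_ℂ( ℂ[z₁,z₂]/I^k ) − |Δ(Γ)|·k² | ≤ C·k; that is, dim_ℂ( ℂ[z₁,z₂]/I^k ) = |Δ(Γ)|·k² + O(k). -/

import Mathlib

open Pointwise MeasureTheory

noncomputable section

/-- The closed first quadrant in `ℝ²`. -/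
def quadrant : Set (ℝ × ℝ) := {p | 0 ≤ p.1 ∧ 0 ≤ p.2}

/-- The embedding of `ℕ²` into `ℝ²`. -/
def toR2 (γ : ℕ × ℕ) : ℝ × ℝ := ((γ.1 : ℝ), (γ.2 : ℝ))

/-- The Newton polygon `Δ(Γ) = ℝ≥0² \ conv(ℝ≥0² + Γ)` of a finite set `Γ ⊆ ℕ²`. -/
def newtonPolygon (Γ : Finset (ℕ × ℕ)) : Set (ℝ × ℝ) :=
  quadrant \ closure (convexHull ℝ (quadrant + toR2 '' (Γ : Set (ℕ × ℕ))))

/-- The area `|Δ(Γ)|` of the Newton polygon. -/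
def newtonArea (Γ : Finset (ℕ × ℕ)) : ℝ := (volume (newtonPolygon Γ)).toReal

/-- The monomial ideal of `ℂ[z₁,z₂]` generated by the monomials with exponents in `Γ`. -/
def monomialIdeal (Γ : Finset (ℕ × ℕ)) : Ideal (MvPolynomial (Fin 2) ℂ) :=
  Ideal.span ((fun γ : ℕ × ℕ => MvPolynomial.X 0 ^ γ.1 * MvPolynomial.X 1 ^ γ.2) ''
    (Γ : Set (ℕ × ℕ)))

open ENNReal

-- ### exponents
def toF (γ : ℕ × ℕ) : Fin 2 →₀ ℕ := Finsupp.single 0 γ.1 + Finsupp.single 1 γ.2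

@[simp] lemma toF_apply0 (γ : ℕ × ℕ) : toF γ 0 = γ.1 := by simp [toF]
@[simp] lemma toF_apply1 (γ : ℕ × ℕ) : toF γ 1 = γ.2 := by simp [toF]

lemma toF_le_iff {γ δ : ℕ × ℕ} : toF γ ≤ toF δ ↔ γ ≤ δ := by
  constructor
  · intro h; exact ⟨by simpa using h 0, by simpa using h 1⟩
  · intro h i
    fin_cases i
    · simpa using h.1
    · simpa using h.2

lemma toF_le_iff' {γ δ : ℕ × ℕ} : toF γ ≤ toF δ ↔ γ ≤ δ := toF_le_iff

lemma toF_surj (d : Fin 2 →₀ ℕ) : toF (d 0, d 1) = d := by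
  ext i; fin_cases i <;> simp

lemma toF_le_iff_pair {γ : ℕ × ℕ} {d : Fin 2 →₀ ℕ} : toF γ ≤ d ↔ γ ≤ (d 0, d 1) := by
  rw [← toF_surj d, toF_le_iff]; rw [toF_surj]

lemma monomial_toF (γ : ℕ × ℕ) :
    (MvPolynomial.X 0 ^ γ.1 * MvPolynomial.X 1 ^ γ.2 : MvPolynomial (Fin 2) ℂ)
      = MvPolynomial.monomial (toF γ) 1 := by
  rw [MvPolynomial.X_pow_eq_monomial, MvPolynomial.X_pow_eq_monomial,
    MvPolynomial.monomial_mul, one_mul, toF]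

-- ### iterated sumsets
def iterSum (Γ : Finset (ℕ × ℕ)) : ℕ → Set (ℕ × ℕ)
  | 0 => {0}
  | k + 1 => iterSum Γ k + (Γ : Set (ℕ × ℕ))

lemma image_monomial_add (A B : Set (Fin 2 →₀ ℕ)) :
    ((fun d => MvPolynomial.monomial d (1 : ℂ)) '' A)
      * ((fun d => MvPolynomial.monomial d (1 : ℂ)) '' B)
      = (fun d => MvPolynomial.monomial d (1 : ℂ)) '' (A + B) := by
  ext x
  simp only [Set.mem_mul, Set.mem_image, Set.mem_add]
  constructor
  · rintro ⟨-, ⟨u, hu, rfl⟩, -, ⟨v, hv, rfl⟩, rfl⟩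
    exact ⟨u + v, ⟨u, hu, v, hv, rfl⟩, by rw [MvPolynomial.monomial_mul, one_mul]⟩
  · rintro ⟨-, ⟨u, hu, v, hv, rfl⟩, rfl⟩
    exact ⟨_, ⟨u, hu, rfl⟩, _, ⟨v, hv, rfl⟩, by rw [MvPolynomial.monomial_mul, one_mul]⟩

lemma monomialIdeal_eq (Γ : Finset (ℕ × ℕ)) :
    monomialIdeal Γ
      = Ideal.span ((fun d => MvPolynomial.monomial d (1 : ℂ)) '' (toF '' (Γ : Set (ℕ × ℕ)))) := by
  rw [monomialIdeal, ← Set.image_comp]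
  congr 1
  exact Set.image_congr fun γ _ => monomial_toF γ

lemma toF_image_add (A B : Set (ℕ × ℕ)) : toF '' (A + B) = toF '' A + toF '' B := by
  ext d
  simp only [Set.mem_image, Set.mem_add]
  constructor
  · rintro ⟨-, ⟨u, hu, v, hv, rfl⟩, rfl⟩
    exact ⟨toF u, ⟨u, hu, rfl⟩, toF v, ⟨v, hv, rfl⟩, by ext i; fin_cases i <;> simp⟩
  · rintro ⟨-, ⟨u, hu, rfl⟩, -, ⟨v, hv, rfl⟩, rfl⟩
    exact ⟨u + v, ⟨u, hu, v, hv, rfl⟩, by ext i; fin_cases i <;> simp⟩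

lemma monomialIdeal_pow (Γ : Finset (ℕ × ℕ)) (k : ℕ) :
    (monomialIdeal Γ) ^ k
      = Ideal.span ((fun d => MvPolynomial.monomial d (1 : ℂ)) '' (toF '' iterSum Γ k)) := by
  induction k with
  | zero =>
      rw [pow_zero]
      have : toF '' iterSum Γ 0 = {0} := by
        simp [iterSum]
        ext i; fin_cases i <;> simp
      rw [this, Set.image_singleton, MvPolynomial.monomial_zero', map_one, Ideal.one_eq_top,
        Ideal.span_singleton_one]
  | succ k ih =>
      rw [pow_succ, ih, monomialIdeal_eq, Ideal.span_mul_span', image_monomial_add,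
        ← toF_image_add]
      rfl

-- ### standard monomials
def expE (Γ : Finset (ℕ × ℕ)) (k : ℕ) : Set (ℕ × ℕ) := {m | ∃ s ∈ iterSum Γ k, s ≤ m}
def stdB (Γ : Finset (ℕ × ℕ)) (k : ℕ) : Set (ℕ × ℕ) := {m | ¬ ∃ s ∈ iterSum Γ k, s ≤ m}

lemma mem_pow_iff (Γ : Finset (ℕ × ℕ)) (k : ℕ) (x : MvPolynomial (Fin 2) ℂ) :
    x ∈ (monomialIdeal Γ) ^ k ↔ ∀ d ∈ x.support, (d 0, d 1) ∈ expE Γ k := by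
  rw [monomialIdeal_pow, MvPolynomial.mem_ideal_span_monomial_image]
  refine forall₂_congr fun d _ => ?_
  constructor
  · rintro ⟨-, ⟨s, hs, rfl⟩, hle⟩
    exact ⟨s, hs, toF_le_iff_pair.mp hle⟩
  · rintro ⟨s, hs, hle⟩
    exact ⟨toF s, ⟨s, hs, rfl⟩, toF_le_iff_pair.mpr hle⟩

lemma smul_mem_iterSum (Γ : Finset (ℕ × ℕ)) {γ : ℕ × ℕ} (hγ : γ ∈ Γ) (k : ℕ) :
    k • γ ∈ iterSum Γ k := by
  induction k with
  | zero => simp [iterSum]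
  | succ k ih =>
      have : (k + 1) • γ = k • γ + γ := by rw [succ_nsmul]
      rw [this]
      exact Set.add_mem_add ih hγ

lemma stdB_subset_box (Γ : Finset (ℕ × ℕ)) {a b k : ℕ} (ha : (a, 0) ∈ Γ) (hb : (0, b) ∈ Γ) :
    stdB Γ k ⊆ Set.Iio (k * a) ×ˢ Set.Iio (k * b) := by
  intro m hm
  by_contra hbox
  simp only [Set.mem_prod, Set.mem_Iio, not_and_or, not_lt] at hbox
  rcases hbox with h | h
  · exact hm ⟨k • (a, 0), smul_mem_iterSum Γ ha k, by
      constructor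
      · simpa [Prod.smul_fst, smul_eq_mul] using h
      · simp⟩
  · exact hm ⟨k • (0, b), smul_mem_iterSum Γ hb k, by
      constructor
      · simp
      · simpa [Prod.smul_snd, smul_eq_mul] using h⟩

lemma stdB_finite (Γ : Finset (ℕ × ℕ)) {a b k : ℕ} (ha : (a, 0) ∈ Γ) (hb : (0, b) ∈ Γ) :
    (stdB Γ k).Finite :=
  Set.Finite.subset (Set.Finite.prod (Set.finite_Iio _) (Set.finite_Iio _))
    (stdB_subset_box Γ ha hb)

-- ### dimension of the quotient
def expEquiv : (Fin 2 →₀ ℕ) ≃ (ℕ × ℕ) where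
  toFun d := (d 0, d 1)
  invFun := toF
  left_inv d := toF_surj d
  right_inv γ := by simp

lemma finrank_quotient_eq (Γ : Finset (ℕ × ℕ)) {a b : ℕ} (ha : (a, 0) ∈ Γ) (hb : (0, b) ∈ Γ)
    (k : ℕ) :
    Module.finrank ℂ (MvPolynomial (Fin 2) ℂ ⧸ (monomialIdeal Γ) ^ k)
      = Nat.card (stdB Γ k) := by
  classical
  set P : Ideal (MvPolynomial (Fin 2) ℂ) := (monomialIdeal Γ) ^ k with hP
  set B : Set (Fin 2 →₀ ℕ) := {d | (d 0, d 1) ∈ stdB Γ k} with hB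
  have eB : ↥B ≃ ↥(stdB Γ k) := (expEquiv.subtypeEquiv fun d => Iff.rfl)
  have hBfin : B.Finite := by
    have := stdB_finite Γ (k := k) ha hb
    have : ((fun d : Fin 2 →₀ ℕ => ((d 0 : ℕ), (d 1 : ℕ))) ⁻¹' stdB Γ k).Finite :=
      Set.Finite.preimage (Set.injOn_of_injective expEquiv.injective) this
    exact this
  haveI : Fintype ↥B := hBfin.fintype
  let φ : MvPolynomial (Fin 2) ℂ →ₗ[ℂ] (MvPolynomial (Fin 2) ℂ ⧸ P) :=
    (Ideal.Quotient.mkₐ ℂ P).toLinearMap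
  let v : ↥B → (MvPolynomial (Fin 2) ℂ ⧸ P) := fun d => φ (MvPolynomial.monomial ↑d 1)
  have hφmem : ∀ x, φ x = 0 ↔ x ∈ P := by
    intro x
    simp only [φ, AlgHom.toLinearMap_apply, Ideal.Quotient.mkₐ_eq_mk]
    exact Ideal.Quotient.eq_zero_iff_mem
  have hli : LinearIndependent ℂ v := by
    rw [linearIndependent_iff]
    intro l hl
    have hq : (l.sum fun d c => c • MvPolynomial.monomial (↑d : Fin 2 →₀ ℕ) (1 : ℂ)) ∈ P := by
      rw [← hφmem]
      rw [map_finsuppSum]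
      simpa [Finsupp.linearCombination, Finsupp.sum, v] using hl
    ext d0
    by_contra hne
    have hd0 : d0 ∈ l.support := Finsupp.mem_support_iff.mpr hne
    have hcoeff : MvPolynomial.coeff (↑d0 : Fin 2 →₀ ℕ)
        (l.sum fun d c => c • MvPolynomial.monomial (↑d : Fin 2 →₀ ℕ) (1 : ℂ)) = l d0 := by
      rw [Finsupp.sum, MvPolynomial.coeff_sum]
      rw [Finset.sum_eq_single d0]
      · simp [MvPolynomial.coeff_smul, MvPolynomial.coeff_monomial]
      · intro d hd hdne
        have : (↑d : Fin 2 →₀ ℕ) ≠ ↑d0 := fun h => hdne (Subtype.ext h)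
        simp [MvPolynomial.coeff_smul, MvPolynomial.coeff_monomial, this]
      · intro h; exact absurd hd0 h
    have hmem := (mem_pow_iff Γ k _).mp hq (↑d0) (by
      rw [MvPolynomial.mem_support_iff, hcoeff]; exact hne)
    exact d0.2 hmem
  have hspan : ⊤ ≤ Submodule.span ℂ (Set.range v) := by
    rintro x -
    obtain ⟨q, rfl⟩ := Ideal.Quotient.mk_surjective x
    have : (Ideal.Quotient.mk P) q = φ q := by simp [φ]
    rw [this, ← MvPolynomial.support_sum_monomial_coeff q, map_sum]
    refine Submodule.sum_mem _ fun d hd => ?_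
    by_cases hmem : (d 0, d 1) ∈ expE Γ k
    · have : MvPolynomial.monomial d (MvPolynomial.coeff d q) ∈ P := by
        rw [mem_pow_iff]
        intro m hm
        have : m = d := by
          have := MvPolynomial.support_monomial_subset hm
          simpa using this
        rwa [this]
      rw [hφmem _ |>.mpr this]
      exact Submodule.zero_mem _
    · have hdB : d ∈ B := hmem
      have : MvPolynomial.monomial d (MvPolynomial.coeff d q)
          = (MvPolynomial.coeff d q) • MvPolynomial.monomial d (1 : ℂ) := by
        rw [MvPolynomial.smul_monomial, smul_eq_mul, mul_one]
      rw [this, LinearMap.map_smul]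
      exact Submodule.smul_mem _ _ (Submodule.subset_span ⟨⟨d, hdB⟩, rfl⟩)
  let bas : Module.Basis ↥B ℂ (MvPolynomial (Fin 2) ℂ ⧸ P) := Module.Basis.mk hli hspan
  rw [Module.finrank_eq_card_basis bas, ← Nat.card_eq_fintype_card, Nat.card_congr eB]

-- ### geometry
def CH (Γ : Finset (ℕ × ℕ)) : Set (ℝ × ℝ) := convexHull ℝ (toR2 '' (Γ : Set (ℕ × ℕ)))

lemma convex_quadrant : Convex ℝ quadrant := by
  intro x hx y hy s t hs ht _
  exact ⟨add_nonneg (mul_nonneg hs hx.1) (mul_nonneg ht hy.1),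
    add_nonneg (mul_nonneg hs hx.2) (mul_nonneg ht hy.2)⟩

lemma isClosed_quadrant : IsClosed quadrant := by
  have : quadrant = Prod.fst ⁻¹' (Set.Ici 0) ∩ Prod.snd ⁻¹' (Set.Ici 0) := by
    ext p; simp [quadrant, Set.mem_Ici]
  rw [this]
  exact (isClosed_Ici.preimage continuous_fst).inter (isClosed_Ici.preimage continuous_snd)

lemma closure_hull_eq (Γ : Finset (ℕ × ℕ)) :
    closure (convexHull ℝ (quadrant + toR2 '' (Γ : Set (ℕ × ℕ)))) = quadrant + CH Γ := by
  rw [convexHull_add, convex_quadrant.convexHull_eq]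
  show closure (quadrant + CH Γ) = _
  refine IsClosed.closure_eq ?_
  rw [add_comm quadrant (CH Γ)]
  exact isClosed_quadrant.add_left_of_isCompact
    ((Γ.finite_toSet.image toR2).isCompact_convexHull ℝ)

lemma newtonPolygon_eq (Γ : Finset (ℕ × ℕ)) :
    newtonPolygon Γ = quadrant \ (quadrant + CH Γ) := by
  rw [newtonPolygon, closure_hull_eq]

lemma quadrant_add_quadrant : quadrant + quadrant = quadrant := by
  apply Set.Subset.antisymm
  · rintro p ⟨x, hx, y, hy, rfl⟩
    exact ⟨add_nonneg hx.1 hy.1, add_nonneg hx.2 hy.2⟩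
  · intro p hp
    exact ⟨p, hp, 0, ⟨le_refl _, le_refl _⟩, by simp⟩

lemma smul_quadrant {r : ℝ} (hr : 0 < r) : r • quadrant = quadrant := by
  apply Set.Subset.antisymm
  · rintro p ⟨x, hx, rfl⟩
    exact ⟨by simpa using mul_nonneg hr.le hx.1, by simpa using mul_nonneg hr.le hx.2⟩
  · intro p hp
    refine ⟨r⁻¹ • p, ⟨?_, ?_⟩, by simp [smul_smul, mul_inv_cancel₀ hr.ne']⟩
    · simpa using mul_nonneg (inv_nonneg.mpr hr.le) hp.1
    · simpa using mul_nonneg (inv_nonneg.mpr hr.le) hp.2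

lemma smul_set_add' {r : ℝ} (A B : Set (ℝ × ℝ)) : r • (A + B) = r • A + r • B := by
  ext p
  constructor
  · rintro ⟨q, ⟨x, hx, y, hy, rfl⟩, rfl⟩
    exact ⟨r • x, ⟨x, hx, rfl⟩, r • y, ⟨y, hy, rfl⟩, (smul_add r x y).symm⟩
  · rintro ⟨-, ⟨x, hx, rfl⟩, -, ⟨y, hy, rfl⟩, rfl⟩
    exact ⟨x + y, ⟨x, hx, y, hy, rfl⟩, smul_add r x y⟩

/-- the scaled staircase region -/
def Qk (Γ : Finset (ℕ × ℕ)) (r : ℝ) : Set (ℝ × ℝ) := quadrant + r • CH Γ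

lemma smul_newtonPolygon (Γ : Finset (ℕ × ℕ)) {r : ℝ} (hr : 0 < r) :
    r • newtonPolygon Γ = quadrant \ Qk Γ r := by
  rw [newtonPolygon_eq, Set.smul_set_sdiff₀ hr.ne', smul_set_add', smul_quadrant hr, Qk]

lemma toR2_add (x y : ℕ × ℕ) : toR2 (x + y) = toR2 x + toR2 y := by
  simp [toR2, Prod.ext_iff]

lemma toR2_nsmul (n : ℕ) (x : ℕ × ℕ) : toR2 (n • x) = (n : ℝ) • toR2 x := by
  simp [toR2, Prod.ext_iff]

lemma toR2_le_iff {x y : ℕ × ℕ} : toR2 x ≤ toR2 y ↔ x ≤ y := by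
  simp [toR2, Prod.le_def]

lemma toR2_mem_quadrant (x : ℕ × ℕ) : toR2 x ∈ quadrant := by
  exact ⟨Nat.cast_nonneg _, Nat.cast_nonneg _⟩

lemma Qk_add_quadrant (Γ : Finset (ℕ × ℕ)) (r : ℝ) : Qk Γ r + quadrant ⊆ Qk Γ r := by
  rw [Qk, add_comm quadrant (r • CH Γ), add_assoc, quadrant_add_quadrant,
    add_comm (r • CH Γ) quadrant]

lemma Qk_upward {Γ : Finset (ℕ × ℕ)} {r : ℝ} {p q : ℝ × ℝ} (hp : p ∈ Qk Γ r) (hpq : p ≤ q) :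
    q ∈ Qk Γ r := by
  have : q = p + (q - p) := by ring
  rw [this]
  exact Qk_add_quadrant Γ r ⟨p, hp, q - p, ⟨by simpa using hpq.1, by simpa using hpq.2⟩, rfl⟩

-- ### lattice inclusion L1
lemma iterSum_toR2_mem {Γ : Finset (ℕ × ℕ)} (hne : (Γ : Set (ℕ × ℕ)).Nonempty) {k : ℕ}
    {s : ℕ × ℕ} (hs : s ∈ iterSum Γ k) : toR2 s ∈ (k : ℝ) • CH Γ := by
  induction k generalizing s with
  | zero =>
      have : s = 0 := hs
      have hCH : (CH Γ).Nonempty := (hne.image toR2).mono (subset_convexHull ℝ _)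
      rw [this, Nat.cast_zero, Set.zero_smul_set hCH]
      simp [toR2, Prod.ext_iff]
  | succ k ih =>
      obtain ⟨u, hu, γ, hγ, rfl⟩ := hs
      have hconv : Convex ℝ (CH Γ) := convex_convexHull ℝ _
      have hsplit : ((k : ℝ) + 1) • CH Γ = (k : ℝ) • CH Γ + (1 : ℝ) • CH Γ :=
        hconv.add_smul (Nat.cast_nonneg k) zero_le_one
      rw [Nat.cast_succ, hsplit, toR2_add]
      exact Set.add_mem_add (ih hu)
        (by rw [one_smul]; exact subset_convexHull ℝ _ ⟨γ, hγ, rfl⟩)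

lemma mem_expE_toR2 {Γ : Finset (ℕ × ℕ)} (hne : (Γ : Set (ℕ × ℕ)).Nonempty) {k : ℕ}
    {m : ℕ × ℕ} (hm : m ∈ expE Γ k) : toR2 m ∈ Qk Γ (k : ℝ) := by
  obtain ⟨s, hs, hsm⟩ := hm
  exact Qk_upward (q := toR2 m)
    (Set.add_mem_add (a := 0) ⟨le_refl _, le_refl _⟩ (iterSum_toR2_mem hne hs))
    (by rw [zero_add]; exact toR2_le_iff.mpr hsm)

-- ### combination lemmas for L2
lemma iterSum_add_subset (Γ : Finset (ℕ × ℕ)) (m n : ℕ) :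
    iterSum Γ m + iterSum Γ n ⊆ iterSum Γ (m + n) := by
  induction n with
  | zero =>
      rintro p ⟨x, hx, y, hy, rfl⟩
      have : y = 0 := hy
      simpa [this] using hx
  | succ n ih =>
      rintro p ⟨x, hx, y, hy, rfl⟩
      obtain ⟨u, hu, γ, hγ, rfl⟩ := hy
      show x + (u + γ) ∈ iterSum Γ (m + (n+1))
      have h2 : x + (u + γ) = (x + u) + γ := by ring
      rw [h2]
      exact Set.add_mem_add (ih (Set.add_mem_add hx hu)) hγ

lemma nsmul_mem_iterSum {Γ : Finset (ℕ × ℕ)} {γ : ℕ × ℕ} (hγ : γ ∈ Γ) (n : ℕ) :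
    n • γ ∈ iterSum Γ n := smul_mem_iterSum Γ hγ n

lemma sum_nsmul_mem_iterSum {Γ : Finset (ℕ × ℕ)} {ι : Type*} (t : Finset ι)
    (g : ι → ℕ × ℕ) (n : ι → ℕ) (hg : ∀ i ∈ t, g i ∈ Γ) :
    (∑ i ∈ t, n i • g i) ∈ iterSum Γ (∑ i ∈ t, n i) := by
  classical
  induction t using Finset.induction with
  | empty => simp only [Finset.sum_empty]; exact rfl
  | @insert a s hx ih =>
      rw [Finset.sum_insert hx, Finset.sum_insert hx]
      exact iterSum_add_subset Γ _ _
        (Set.add_mem_add (nsmul_mem_iterSum (hg a (Finset.mem_insert_self a s)) _)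
          (ih fun i hi => hg i (Finset.mem_insert_of_mem hi)))

lemma exists_le_of_mem_iterSum {Γ : Finset (ℕ × ℕ)} {k N : ℕ} (hkN : k ≤ N) {s : ℕ × ℕ}
    (hs : s ∈ iterSum Γ N) : ∃ s' ∈ iterSum Γ k, s' ≤ s := by
  induction N generalizing s with
  | zero =>
      have hk : k = 0 := Nat.le_zero.mp hkN
      exact ⟨s, by rw [hk]; exact hs, le_refl _⟩
  | succ N ih =>
      rcases Nat.lt_or_ge k (N + 1) with h | h
      · obtain ⟨u, hu, γ, hγ, rfl⟩ := hs
        obtain ⟨s', hs', hle⟩ := ih (Nat.lt_succ_iff.mp h) hu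
        exact ⟨s', hs', hle.trans ⟨Nat.le_add_right _ _, Nat.le_add_right _ _⟩⟩
      · have : k = N + 1 := le_antisymm hkN h
        exact ⟨s, by rw [this]; exact hs, le_refl _⟩

-- ### L2: rounding lemma
def cconst (Γ : Finset (ℕ × ℕ)) : ℕ := ∑ γ ∈ Γ, (γ.1 + γ.2)

def toR2Hom : ℕ × ℕ →+ ℝ × ℝ :=
  AddMonoidHom.prodMap (Nat.castAddMonoidHom ℝ) (Nat.castAddMonoidHom ℝ)

lemma toR2Hom_eq : ⇑toR2Hom = toR2 := rfl

lemma toR2_sum {ι : Type*} (t : Finset ι) (f : ι → ℕ × ℕ) :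
    toR2 (∑ i ∈ t, f i) = ∑ i ∈ t, toR2 (f i) := by
  rw [← toR2Hom_eq, map_sum]

lemma sum_image_le_aux {s : Finset (ℕ × ℕ)} {g : ℝ × ℝ → ℝ}
    (hg : ∀ γ ∈ s, 0 ≤ g (toR2 γ)) :
    ∑ v ∈ s.image toR2, g v ≤ ∑ γ ∈ s, g (toR2 γ) := by
  classical
  induction s using Finset.induction with
  | empty => simp
  | @insert a s ha ih =>
      rw [Finset.image_insert, Finset.sum_insert ha]
      by_cases hmem : toR2 a ∈ s.image toR2
      · rw [Finset.insert_eq_self.mpr hmem]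
        calc ∑ v ∈ s.image toR2, g v ≤ ∑ γ ∈ s, g (toR2 γ) :=
              ih fun γ hγ => hg γ (Finset.mem_insert_of_mem hγ)
          _ ≤ g (toR2 a) + ∑ γ ∈ s, g (toR2 γ) :=
              le_add_of_nonneg_left (hg a (Finset.mem_insert_self a s))
      · rw [Finset.sum_insert hmem]
        exact add_le_add_right (ih fun γ hγ => hg γ (Finset.mem_insert_of_mem hγ)) _

lemma mem_expE_of_shifted {Γ : Finset (ℕ × ℕ)} {k : ℕ} (hk : 1 ≤ k) {m : ℕ × ℕ}
    (h : toR2 m - ((cconst Γ : ℝ), (cconst Γ : ℝ)) ∈ Qk Γ (k : ℝ)) : m ∈ expE Γ k := by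
  classical
  obtain ⟨q, hq, -, ⟨y', hy', rfl⟩, hqy⟩ := h
  set T : Finset (ℝ × ℝ) := Γ.image toR2 with hT
  have hy'' : y' ∈ convexHull ℝ (T : Set (ℝ × ℝ)) := by
    rwa [hT, Finset.coe_image]
  rw [Finset.convexHull_eq] at hy''
  obtain ⟨w, hw0, hw1, hcm⟩ := hy''
  rw [Finset.centerMass_eq_of_sum_1 _ id hw1] at hcm
  -- choice of preimages
  have hgex : ∀ v ∈ T, ∃ γ ∈ Γ, toR2 γ = v := fun v hv => by
    obtain ⟨γ, hγ, rfl⟩ := Finset.mem_image.mp hv; exact ⟨γ, hγ, rfl⟩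
  let g : ℝ × ℝ → ℕ × ℕ := fun v => if h : ∃ γ ∈ Γ, toR2 γ = v then h.choose else 0
  have hgΓ : ∀ v ∈ T, g v ∈ Γ := fun v hv => by
    simp only [g, dif_pos (hgex v hv)]; exact (hgex v hv).choose_spec.1
  have hgv : ∀ v ∈ T, toR2 (g v) = v := fun v hv => by
    simp only [g, dif_pos (hgex v hv)]; exact (hgex v hv).choose_spec.2
  -- rounded weights
  let n : ℝ × ℝ → ℕ := fun v => ⌈(k : ℝ) * w v⌉₊
  set N : ℕ := ∑ v ∈ T, n v with hN
  have hkN : k ≤ N := by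
    have hreal : (k : ℝ) ≤ (N : ℝ) := by
      calc (k : ℝ) = ∑ v ∈ T, (k : ℝ) * w v := by rw [← Finset.mul_sum, hw1, mul_one]
        _ ≤ ∑ v ∈ T, (n v : ℝ) := Finset.sum_le_sum fun v _ => Nat.le_ceil _
        _ = (N : ℝ) := by rw [hN]; push_cast; ring
    exact_mod_cast hreal
  set s₀ : ℕ × ℕ := ∑ v ∈ T, n v • g v with hs₀
  have hs₀mem : s₀ ∈ iterSum Γ N := sum_nsmul_mem_iterSum T g n hgΓ
  -- the key inequality toR2 s₀ ≤ toR2 m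
  have hvnn : ∀ v ∈ T, (0 : ℝ) ≤ v.1 ∧ (0 : ℝ) ≤ v.2 := fun v hv => by
    obtain ⟨γ, _, rfl⟩ := Finset.mem_image.mp hv
    exact ⟨Nat.cast_nonneg _, Nat.cast_nonneg _⟩
  have hterm : ∀ v ∈ T, (n v : ℝ) • v ≤ ((k : ℝ) * w v) • v + v := by
    intro v hv
    have hn : (n v : ℝ) ≤ (k : ℝ) * w v + 1 :=
      (Nat.ceil_lt_add_one (mul_nonneg (Nat.cast_nonneg k) (hw0 v hv))).le
    constructor
    · simp only [Prod.smul_fst, Prod.fst_add, smul_eq_mul]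
      nlinarith [(hvnn v hv).1]
    · simp only [Prod.smul_snd, Prod.snd_add, smul_eq_mul]
      nlinarith [(hvnn v hv).2]
  have hsum : toR2 s₀ ≤ (k : ℝ) • y' + ∑ v ∈ T, v := by
    rw [hs₀, toR2_sum]
    have h1 : ∑ v ∈ T, toR2 (n v • g v) = ∑ v ∈ T, (n v : ℝ) • v := by
      refine Finset.sum_congr rfl fun v hv => ?_
      rw [toR2_nsmul, hgv v hv]
    rw [h1, ← hcm]
    calc ∑ v ∈ T, (n v : ℝ) • v ≤ ∑ v ∈ T, (((k : ℝ) * w v) • v + v) :=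
          Finset.sum_le_sum hterm
      _ = (k : ℝ) • ∑ v ∈ T, w v • id v + ∑ v ∈ T, v := by
          rw [Finset.sum_add_distrib, Finset.smul_sum]
          simp only [id_eq, smul_smul]
  have hcvec : (∑ v ∈ T, v) ≤ ((cconst Γ : ℝ), (cconst Γ : ℝ)) := by
    have h1 : ∑ v ∈ T, (v : ℝ × ℝ).1 ≤ (cconst Γ : ℝ) := by
      calc ∑ v ∈ T, (v : ℝ × ℝ).1 ≤ ∑ γ ∈ Γ, (toR2 γ).1 :=
            sum_image_le_aux fun γ _ => Nat.cast_nonneg _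
        _ ≤ (cconst Γ : ℝ) := by
            rw [cconst]; push_cast
            exact Finset.sum_le_sum fun γ _ => by
              simp [toR2]
    have h2 : ∑ v ∈ T, (v : ℝ × ℝ).2 ≤ (cconst Γ : ℝ) := by
      calc ∑ v ∈ T, (v : ℝ × ℝ).2 ≤ ∑ γ ∈ Γ, (toR2 γ).2 :=
            sum_image_le_aux fun γ _ => Nat.cast_nonneg _
        _ ≤ (cconst Γ : ℝ) := by
            rw [cconst]; push_cast
            exact Finset.sum_le_sum fun γ _ => by
              simp [toR2]
    constructor
    · simpa [Prod.fst_sum] using h1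
    · simpa [Prod.snd_sum] using h2
  have hfinal : toR2 s₀ ≤ toR2 m := by
    have h3 : (k : ℝ) • y' + ((cconst Γ : ℝ), (cconst Γ : ℝ)) = toR2 m - q := by
      have := hqy
      have h4 : toR2 m - ((cconst Γ : ℝ), (cconst Γ : ℝ)) = q + (k : ℝ) • y' := this.symm
      have h5 : toR2 m = q + (k : ℝ) • y' + ((cconst Γ : ℝ), (cconst Γ : ℝ)) := by
        rw [← h4]; abel
      rw [h5]; abel
    calc toR2 s₀ ≤ (k : ℝ) • y' + ∑ v ∈ T, v := hsum
      _ ≤ (k : ℝ) • y' + ((cconst Γ : ℝ), (cconst Γ : ℝ)) := add_le_add_right hcvec _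
      _ = toR2 m - q := h3
      _ ≤ toR2 m := by
          constructor
          · simp only [Prod.fst_sub]; linarith [hq.1]
          · simp only [Prod.snd_sub]; linarith [hq.2]
  obtain ⟨s', hs', hle⟩ := exists_le_of_mem_iterSum hkN hs₀mem
  exact ⟨s', hs', hle.trans (toR2_le_iff.mp hfinal)⟩

-- ### unit squares and counting
def usq (m : ℕ × ℕ) : Set (ℝ × ℝ) :=
  Set.Ico (m.1 : ℝ) (m.1 + 1) ×ˢ Set.Ico (m.2 : ℝ) (m.2 + 1)

lemma volume_usq (m : ℕ × ℕ) : volume (usq m) = 1 := by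
  rw [usq, MeasureTheory.Measure.volume_eq_prod, MeasureTheory.Measure.prod_prod]
  simp [Real.volume_Ico]

lemma measurable_usq (m : ℕ × ℕ) : MeasurableSet (usq m) :=
  measurableSet_Ico.prod measurableSet_Ico

lemma usq_disjoint {m m' : ℕ × ℕ} (h : m ≠ m') : Disjoint (usq m) (usq m') := by
  rw [Set.disjoint_left]
  rintro p ⟨⟨h11, h12⟩, h13, h14⟩ ⟨⟨h21, h22⟩, h23, h24⟩
  apply h
  have e1 : m.1 = m'.1 := by
    have l1 : (m.1 : ℝ) < m'.1 + 1 := lt_of_le_of_lt h11 h22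
    have l2 : (m'.1 : ℝ) < m.1 + 1 := lt_of_le_of_lt h21 h12
    have : m.1 ≤ m'.1 := by exact_mod_cast Nat.lt_succ_iff.mp (by exact_mod_cast l1)
    have : m'.1 ≤ m.1 := by exact_mod_cast Nat.lt_succ_iff.mp (by exact_mod_cast l2)
    omega
  have e2 : m.2 = m'.2 := by
    have l1 : (m.2 : ℝ) < m'.2 + 1 := lt_of_le_of_lt h13 h24
    have l2 : (m'.2 : ℝ) < m.2 + 1 := lt_of_le_of_lt h23 h14
    have : m.2 ≤ m'.2 := by exact_mod_cast Nat.lt_succ_iff.mp (by exact_mod_cast l1)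
    have : m'.2 ≤ m.2 := by exact_mod_cast Nat.lt_succ_iff.mp (by exact_mod_cast l2)
    omega
  exact Prod.ext e1 e2

lemma card_le_volume {F : Finset (ℕ × ℕ)} {D : Set (ℝ × ℝ)}
    (h : ∀ m ∈ F, usq m ⊆ D) : (F.card : ℝ≥0∞) ≤ volume D := by
  have hdisj : (↑F : Set (ℕ × ℕ)).PairwiseDisjoint usq := fun m _ m' _ hne => usq_disjoint hne
  calc (F.card : ℝ≥0∞) = ∑ m ∈ F, volume (usq m) := by simp [volume_usq]
    _ = volume (⋃ m ∈ F, usq m) :=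
        (measure_biUnion_finset hdisj fun m _ => measurable_usq m).symm
    _ ≤ volume D := measure_mono (Set.iUnion₂_subset h)

lemma volume_le_card {F : Finset (ℕ × ℕ)} {D : Set (ℝ × ℝ)}
    (h : D ⊆ ⋃ m ∈ F, usq m) : volume D ≤ (F.card : ℝ≥0∞) := by
  calc volume D ≤ volume (⋃ m ∈ F, usq m) := measure_mono h
    _ ≤ ∑ m ∈ F, volume (usq m) := measure_biUnion_finset_le F usq
    _ = (F.card : ℝ≥0∞) := by simp [volume_usq]

-- ### volume of the scaled region vs lattice counts
lemma volume_le_stdB_card (Γ : Finset (ℕ × ℕ)) {a b : ℕ} (ha : (a, 0) ∈ Γ) (hb : (0, b) ∈ Γ)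
    (k : ℕ) :
    volume (quadrant \ Qk Γ (k : ℝ))
      ≤ ((stdB_finite Γ (k := k) ha hb).toFinset.card : ℝ≥0∞) := by
  have hne : (Γ : Set (ℕ × ℕ)).Nonempty := ⟨(a, 0), ha⟩
  apply volume_le_card
  intro p hp
  set m : ℕ × ℕ := (⌊p.1⌋₊, ⌊p.2⌋₊) with hm
  have hmle : toR2 m ≤ p := ⟨Nat.floor_le hp.1.1, Nat.floor_le hp.1.2⟩
  have hmD : toR2 m ∉ Qk Γ (k : ℝ) := fun hQ => hp.2 (Qk_upward hQ hmle)
  have hstd : m ∈ stdB Γ k := fun hexp => hmD (mem_expE_toR2 hne hexp)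
  have hmF : m ∈ (stdB_finite Γ (k := k) ha hb).toFinset :=
    (Set.Finite.mem_toFinset _).mpr hstd
  have hpsq : p ∈ usq m :=
    ⟨⟨Nat.floor_le hp.1.1, Nat.lt_floor_add_one _⟩,
      ⟨Nat.floor_le hp.1.2, Nat.lt_floor_add_one _⟩⟩
  exact Set.mem_biUnion hmF hpsq

lemma stdB_filter_card_le (Γ : Finset (ℕ × ℕ)) {a b k : ℕ} (ha : (a, 0) ∈ Γ) (hb : (0, b) ∈ Γ)
    (hk : 1 ≤ k) :
    ((((stdB_finite Γ (k := k) ha hb).toFinset).filter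
        (fun m => cconst Γ + 1 ≤ m.1 ∧ cconst Γ + 1 ≤ m.2)).card : ℝ≥0∞)
      ≤ volume (quadrant \ Qk Γ (k : ℝ)) := by
  classical
  set c := cconst Γ with hc
  set F := (((stdB_finite Γ (k := k) ha hb).toFinset).filter
      (fun m => c + 1 ≤ m.1 ∧ c + 1 ≤ m.2)) with hF
  set F' := F.image (fun m : ℕ × ℕ => (m.1 - (c + 1), m.2 - (c + 1))) with hF'
  have hcard : F'.card = F.card := by
    rw [hF']
    apply Finset.card_image_of_injOn
    intro m hm m' hm' heq
    have h1 := (Finset.mem_filter.mp hm).2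
    have h2 := (Finset.mem_filter.mp hm').2
    simp only [Prod.mk.injEq] at heq
    obtain ⟨e1, e2⟩ := heq
    exact Prod.ext (by omega) (by omega)
  rw [← hcard]
  apply card_le_volume
  intro m' hm'
  obtain ⟨m, hm, rfl⟩ := Finset.mem_image.mp hm'
  obtain ⟨hmB, hm1, hm2⟩ := Finset.mem_filter.mp hm
  have hstd : m ∈ stdB Γ k := (Set.Finite.mem_toFinset _).mp hmB
  intro p hp
  obtain ⟨⟨hp11, hp12⟩, hp21, hp22⟩ := hp
  have hcast1 : ((m.1 - (c + 1) : ℕ) : ℝ) = (m.1 : ℝ) - (c + 1) := by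
    push_cast [Nat.cast_sub hm1]; ring
  have hcast2 : ((m.2 - (c + 1) : ℕ) : ℝ) = (m.2 : ℝ) - (c + 1) := by
    push_cast [Nat.cast_sub hm2]; ring
  constructor
  · exact ⟨le_trans (by positivity) hp11, le_trans (by positivity) hp21⟩
  · intro hQ
    have hup : p ≤ toR2 m - ((c : ℝ), (c : ℝ)) := by
      constructor
      · simp only [toR2, Prod.fst_sub]
        rw [hcast1] at hp12; linarith
      · simp only [toR2, Prod.snd_sub]
        rw [hcast2] at hp22; linarith
    exact hstd (mem_expE_of_shifted hk (Qk_upward hQ hup))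

lemma newtonPolygon_subset_box (Γ : Finset (ℕ × ℕ)) {a b : ℕ} (ha : (a, 0) ∈ Γ)
    (hb : (0, b) ∈ Γ) :
    newtonPolygon Γ ⊆ Set.Ico (0 : ℝ) a ×ˢ Set.Ico (0 : ℝ) b := by
  rw [newtonPolygon_eq]
  rintro p ⟨hp, hnot⟩
  constructor
  · refine ⟨hp.1, ?_⟩
    by_contra hge
    push_neg at hge
    exact hnot ⟨(p.1 - a, p.2), ⟨by show (0:ℝ) ≤ p.1 - a; linarith, hp.2⟩, toR2 (a, 0),
      subset_convexHull ℝ _ ⟨(a, 0), ha, rfl⟩, by simp [toR2, Prod.ext_iff]⟩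
  · refine ⟨hp.2, ?_⟩
    by_contra hge
    push_neg at hge
    exact hnot ⟨(p.1, p.2 - b), ⟨hp.1, by show (0:ℝ) ≤ p.2 - b; linarith⟩, toR2 (0, b),
      subset_convexHull ℝ _ ⟨(0, b), hb, rfl⟩, by simp [toR2, Prod.ext_iff]⟩

lemma volume_newtonPolygon_ne_top (Γ : Finset (ℕ × ℕ)) {a b : ℕ} (ha : (a, 0) ∈ Γ)
    (hb : (0, b) ∈ Γ) : volume (newtonPolygon Γ) ≠ ⊤ := by
  have := measure_mono (μ := volume) (newtonPolygon_subset_box Γ ha hb)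
  refine ne_top_of_le_ne_top ?_ this
  rw [MeasureTheory.Measure.volume_eq_prod, MeasureTheory.Measure.prod_prod]
  exact ENNReal.mul_ne_top (by simp [Real.volume_Ico]) (by simp [Real.volume_Ico])

lemma volume_Dk_eq (Γ : Finset (ℕ × ℕ)) {k : ℕ} (hk : 1 ≤ k) :
    volume (quadrant \ Qk Γ (k : ℝ))
      = ENNReal.ofReal ((k : ℝ) ^ 2) * volume (newtonPolygon Γ) := by
  have hkpos : (0 : ℝ) < (k : ℝ) := by exact_mod_cast hk
  rw [← smul_newtonPolygon Γ hkpos, MeasureTheory.Measure.addHaar_smul]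
  congr 2
  have : Module.finrank ℝ (ℝ × ℝ) = 2 := by
    simp [Module.finrank_prod]
  rw [this, abs_of_nonneg (by positivity)]


/-- `dim_ℂ (ℂ[z₁,z₂]/I^k) = |Δ(I)|·k² + O(k)` for a monomial ideal `I` whose exponent set
meets both coordinate axes. -/
theorem newton_polygon_dimension_asymptotics
    (Γ : Finset (ℕ × ℕ)) (a b : ℕ) (ha : (a, 0) ∈ Γ) (hb : (0, b) ∈ Γ) :
    ∃ C : ℝ, 0 < C ∧ ∀ k : ℕ, 1 ≤ k →
      |(Module.finrank ℂ (MvPolynomial (Fin 2) ℂ ⧸ (monomialIdeal Γ) ^ k) : ℝ)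
        - newtonArea Γ * (k : ℝ) ^ 2| ≤ C * (k : ℝ) := by
  classical
  set c := cconst Γ with hc
  refine ⟨((c : ℝ) + 1) * ((a : ℝ) + b) + 1, by positivity, ?_⟩
  intro k hk
  have hkR : (1 : ℝ) ≤ (k : ℝ) := by exact_mod_cast hk
  set Fb := (stdB_finite Γ (k := k) ha hb).toFinset with hFb
  have hrank : (Module.finrank ℂ (MvPolynomial (Fin 2) ℂ ⧸ (monomialIdeal Γ) ^ k)) =
      Fb.card := by
    rw [finrank_quotient_eq Γ ha hb k, Nat.card_coe_set_eq,
      Set.ncard_eq_toFinset_card (stdB Γ k) (stdB_finite Γ ha hb)]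
  set V := volume (quadrant \ Qk Γ (k : ℝ)) with hV
  have hVdk := volume_Dk_eq Γ (k := k) hk
  have hVtop : V ≠ ⊤ := by
    rw [hV, hVdk]
    exact ENNReal.mul_ne_top ENNReal.ofReal_ne_top (volume_newtonPolygon_ne_top Γ ha hb)
  have hVreal : V.toReal = (k : ℝ) ^ 2 * newtonArea Γ := by
    rw [hV, hVdk, ENNReal.toReal_mul, ENNReal.toReal_ofReal (by positivity)]
    rfl
  -- lower bound
  have hlow : V.toReal ≤ (Fb.card : ℝ) := by
    have h := volume_le_stdB_card Γ ha hb k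
    have := ENNReal.toReal_mono (by exact ENNReal.natCast_ne_top _) h
    simpa using this
  -- upper bound
  set F1 := Fb.filter (fun m => c + 1 ≤ m.1 ∧ c + 1 ≤ m.2) with hF1
  have hF1le : ((F1.card : ℝ)) ≤ V.toReal := by
    have h := stdB_filter_card_le Γ ha hb hk
    have := ENNReal.toReal_mono hVtop h
    rw [ENNReal.toReal_natCast] at this; exact this
  set F2 := Fb.filter (fun m => ¬(c + 1 ≤ m.1 ∧ c + 1 ≤ m.2)) with hF2
  have hsplit : F1.card + F2.card = Fb.card := by
    rw [hF1, hF2]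
    exact Finset.card_filter_add_card_filter_not _
  have hF2le : F2.card ≤ (c + 1) * (k * b) + (k * a) * (c + 1) := by
    have hsub : F2 ⊆ (Finset.range (c + 1) ×ˢ Finset.range (k * b))
        ∪ (Finset.range (k * a) ×ˢ Finset.range (c + 1)) := by
      intro m hm
      obtain ⟨hmB, hmc⟩ := Finset.mem_filter.mp hm
      have hbox := stdB_subset_box Γ ha hb ((Set.Finite.mem_toFinset _).mp hmB)
      obtain ⟨hbox1, hbox2⟩ := hbox
      rw [Finset.mem_union, Finset.mem_product, Finset.mem_product]
      simp only [Finset.mem_range]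
      push_neg at hmc
      by_cases h1 : c + 1 ≤ m.1
      · exact Or.inr ⟨hbox1, by omega⟩
      · exact Or.inl ⟨by omega, hbox2⟩
    refine le_trans (Finset.card_le_card hsub) (le_trans (Finset.card_union_le _ _) ?_)
    simp
  have hhigh : (Fb.card : ℝ) ≤ V.toReal + ((c : ℝ) + 1) * ((a : ℝ) + b) * k := by
    have h2 : (F2.card : ℝ) ≤ ((c : ℝ) + 1) * ((a : ℝ) + b) * k := by
      have : (F2.card : ℝ) ≤ ((c + 1) * (k * b) + (k * a) * (c + 1) : ℕ) := by
        exact_mod_cast hF2le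
      refine le_trans this ?_
      push_cast
      ring_nf
      nlinarith [Nat.cast_nonneg (α := ℝ) a, Nat.cast_nonneg (α := ℝ) b,
        Nat.cast_nonneg (α := ℝ) c, Nat.cast_nonneg (α := ℝ) k]
    have : (Fb.card : ℝ) = (F1.card : ℝ) + (F2.card : ℝ) := by exact_mod_cast hsplit.symm
    rw [this]
    linarith
  rw [hrank]
  rw [abs_le]
  constructor
  · have hCk : (0 : ℝ) ≤ (((c : ℝ) + 1) * ((a : ℝ) + b) + 1) * k := by positivity
    nlinarith [hlow, hVreal]
  · nlinarith [hhigh, hVreal]
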